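/- Consider the mass-action ODE x' = Y·A_k·Ψ(x) on ℝ^n_{>0}, where Ψ_j(x) = ∏_{i=1}^n x_i^{Y_{ij}}. Suppose there is a Kirchhoff matrix A_b and a strictly positive vector c ∈ ℝ^n such that Y·A_k = T·Y·A_b with T = diag(c). Then for any solution x(t) of the original ODE, the function y(t) = T^{-1}·x(t) solves y' = Y·A_k'·Ψ(y), where A_k' = A_b·diag(Ψ(c)). -/

import Mathlib

open Matrix Finset

def IsKirchhoff {m : ℕ} (A : Matrix (Fin m) (Fin m) ℝ) : Prop :=
  (∀ i j, i ≠ j → 0 ≤ A i j) ∧ ∀ j, ∑ i, A i j = 0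

/-- The mass-action monomial vector `Ψ_j(x) = ∏ i, x i ^ Y i j`. -/
noncomputable def massAction {n m : ℕ} (Y : Matrix (Fin n) (Fin m) ℝ)
    (x : Fin n → ℝ) (j : Fin m) : ℝ :=
  ∏ i, x i ^ Y i j

theorem stmt5 {n m : ℕ} (Y : Matrix (Fin n) (Fin m) ℝ) (hY : ∀ i j, 0 ≤ Y i j)
    (Ak Ab : Matrix (Fin m) (Fin m) ℝ)
    (hAk : IsKirchhoff Ak) (hAb : IsKirchhoff Ab)
    (c : Fin n → ℝ) (hc : ∀ i, 0 < c i)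
    (hconj : Y * Ak = Matrix.diagonal c * Y * Ab)
    (Ak' : Matrix (Fin m) (Fin m) ℝ)
    (hAk' : Ak' = Ab * Matrix.diagonal (massAction Y c))
    (x : ℝ → (Fin n → ℝ)) (hx : ∀ t i, 0 < x t i)
    (hode : ∀ t i, HasDerivAt (fun s => x s i)
      ((Y * Ak).mulVec (massAction Y (x t)) i) t) :
    ∀ t i, HasDerivAt (fun s => x s i / c i)
      ((Y * Ak').mulVec (massAction Y (fun i' => x t i' / c i')) i) t := by
  intro t i
  have hcpos : ∀ j, 0 < massAction Y c j := fun j =>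
    Finset.prod_pos fun i' _ => Real.rpow_pos_of_pos (hc i') _
  have hpsi : ∀ j, massAction Y (fun i' => x t i' / c i') j
      = massAction Y (x t) j / massAction Y c j := by
    intro j
    simp only [massAction]
    rw [← Finset.prod_div_distrib]
    exact Finset.prod_congr rfl fun i' _ =>
      Real.div_rpow (hx t i').le (hc i').le _
  have key : (Y * Ak').mulVec (massAction Y (fun i' => x t i' / c i')) i
      = ((Y * Ak).mulVec (massAction Y (x t)) i) / c i := by
    have hYAk : ∀ j, (Y * Ak) i j = c i * (Y * Ab) i j := by
      intro j
      rw [hconj, Matrix.mul_assoc, Matrix.diagonal_mul]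
    simp only [Matrix.mulVec, dotProduct, hAk', ← Matrix.mul_assoc,
      Matrix.mul_diagonal, hpsi, hYAk, Finset.sum_div]
    refine Finset.sum_congr rfl fun j _ => ?_
    have h1 := (hcpos j).ne'
    have h2 := (hc i).ne'
    field_simp
  rw [key]
  exact (hode t i).div_const (c i)
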